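/- Let E be an effect on a Hilbert space H with λI ≤ E ≤ μI where 0 < λ < μ ≤ 1. If φ is a unit vector with strength λ(E, P_φ) = λ, then λ is in the spectrum of E (i.e., E − λI is not invertible). -/

import Mathlib

variable {H : Type*} [NormedAddCommGroup H] [InnerProductSpace ℂ H] [CompleteSpace H]

open RCLike ContinuousLinearMap

local notation "⟪" x ", " y "⟫" => @inner ℂ _ _ x y

lemma pos_cauchy_schwarz (A : H →L[ℂ] H) (hA : A.IsPositive) (x y : H) :
    (re ⟪A x, y⟫) ^ 2 ≤ re ⟪A x, x⟫ * re ⟪A y, y⟫ := by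
  have hsym : ∀ u v : H, re ⟪A u, v⟫ = re ⟪A v, u⟫ := by
    intro u v
    rw [inner_re_symm, ← adjoint_inner_left, hA.isSelfAdjoint.adjoint_eq]
  have key : ∀ s : ℝ, 0 ≤ re ⟪A y, y⟫ * (s * s) + (2 * re ⟪A x, y⟫) * s + re ⟪A x, x⟫ := by
    intro s
    have h0 := hA.2 (x + (s : ℂ) • y)
    rw [reApplyInnerSelf] at h0
    have hexp : ⟪A (x + (s:ℂ) • y), x + (s:ℂ) • y⟫ =
        ⟪A x, x⟫ + (s:ℂ) * ⟪A x, y⟫ + (s:ℂ) * ⟪A y, x⟫ + (s:ℂ) * (s:ℂ) * ⟪A y, y⟫ := by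
      rw [map_add, map_smul]
      simp only [inner_add_left, inner_add_right, inner_smul_left, inner_smul_right,
        Complex.conj_ofReal]
      ring
    rw [hexp] at h0
    simp only [map_add, RCLike.re_to_complex, Complex.re_ofReal_mul, mul_assoc] at h0
    simp only [← RCLike.re_to_complex] at h0
    rw [hsym y x] at h0
    nlinarith [h0]
  have hd := discrim_le_zero key
  rw [discrim] at hd
  nlinarith [hd]

lemma pos_isUnit_coercive (A : H →L[ℂ] H) (hA : A.IsPositive) (hu : IsUnit A)
    {z : H} (hz : z ≠ 0) :
    ∃ ε : ℝ, 0 < ε ∧ ∀ x : H, ε * ‖x‖ ^ 2 ≤ re ⟪A x, x⟫ := by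
  obtain ⟨u, rfl⟩ := hu
  set B : H →L[ℂ] H := ↑u⁻¹ with hB
  have hAB : ∀ x : H, (u : H →L[ℂ] H) (B x) = x := by
    intro x
    have : ((u : H →L[ℂ] H) * B) x = (1 : H →L[ℂ] H) x := by rw [u.mul_inv]
    simpa [mul_apply] using this
  have hBne : B ≠ 0 := by
    intro h
    apply hz
    have := hAB z
    rw [h] at this
    simpa using this.symm
  have hc : 0 < ‖B‖ := norm_pos_iff.mpr hBne
  refine ⟨1 / ‖B‖, by positivity, fun x => ?_⟩
  set A' : H →L[ℂ] H := ↑u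
  have h1 : re ⟪A' x, B x⟫ = ‖x‖ ^ 2 := by
    rw [← hA.isSelfAdjoint.adjoint_eq, adjoint_inner_left, hAB x, inner_self_eq_norm_sq]
  have h2 : re ⟪A' (B x), B x⟫ ≤ ‖B‖ * ‖x‖ ^ 2 := by
    rw [hAB x]
    calc re ⟪x, B x⟫ ≤ ‖⟪x, B x⟫‖ := re_le_norm _
      _ ≤ ‖x‖ * ‖B x‖ := norm_inner_le_norm _ _
      _ ≤ ‖x‖ * (‖B‖ * ‖x‖) := by
          gcongr; exact B.le_opNorm x
      _ = ‖B‖ * ‖x‖ ^ 2 := by ring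
  have hcs := pos_cauchy_schwarz A' hA x (B x)
  rw [h1] at hcs
  have hpos := hA.2 x
  rw [reApplyInnerSelf] at hpos
  rcases eq_or_ne x 0 with hx | hx
  · simp [hx]
  · have hxn : 0 < ‖x‖ := norm_pos_iff.mpr hx
    rw [div_mul_eq_mul_div, div_le_iff₀ hc]
    nlinarith [hcs, mul_le_mul_of_nonneg_left h2 hpos, sq_nonneg ‖x‖, hxn, mul_pos hxn hxn]

/-- An effect on a Hilbert space: a positive operator bounded above by the identity. -/
def IsEffect (A : H →L[ℂ] H) : Prop := A.IsPositive ∧ (1 - A).IsPositive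

/-- The rank-one projection onto the span of a unit vector `φ`. -/
noncomputable def projLine (φ : H) : H →L[ℂ] H := (innerSL ℂ φ).smulRight φ

/-- The strength of an effect `E` along the ray determined by a unit vector `φ`:
`λ(E, P_φ) = sup { t ∈ [0,1] : t • P_φ ≤ E }`. -/
noncomputable def strength (E : H →L[ℂ] H) (φ : H) : ℝ :=
  sSup {t : ℝ | t ∈ Set.Icc (0:ℝ) 1 ∧ (E - (t : ℂ) • projLine φ).IsPositive}

/-- If `λ I ≤ E ≤ μ I` with `0 < λ < μ ≤ 1` and the strength of `E` along a
unit vector `φ` is `λ`, then `λ` belongs to the spectrum of `E`. -/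
theorem strength_mem_spectrum (E : H →L[ℂ] H) (hE : IsEffect E)
    (l m : ℝ) (hl : 0 < l) (hlm : l < m) (hm : m ≤ 1)
    (hlE : (E - (l : ℂ) • (1 : H →L[ℂ] H)).IsPositive)
    (hEm : ((m : ℂ) • (1 : H →L[ℂ] H) - E).IsPositive)
    (φ : H) (hφ : ‖φ‖ = 1) (hsφ : strength E φ = l) :
    (l : ℂ) ∈ spectrum ℂ E := by
  by_contra hspec
  rw [spectrum.notMem_iff] at hspec
  have hu : IsUnit (E - (l : ℂ) • (1 : H →L[ℂ] H)) := by
    have := hspec.neg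
    rwa [neg_sub, Algebra.algebraMap_eq_smul_one] at this
  have hφ0 : φ ≠ 0 := by
    intro h; rw [h, norm_zero] at hφ; norm_num at hφ
  obtain ⟨ε, hε, hco⟩ := pos_isUnit_coercive _ hlE hu hφ0
  set t : ℝ := min (l + ε) m with ht
  have htl : l < t := lt_min (by linarith) hlm
  have ht1 : t ≤ 1 := le_trans (min_le_right _ _) hm
  have ht0 : 0 ≤ t := le_of_lt (lt_trans hl htl)
  have htle : t ≤ l + ε := min_le_left _ _
  -- key computation of the inner product of projLine
  have hP : ∀ x : H, ⟪projLine φ x, x⟫ = ((‖⟪φ, x⟫‖ ^ 2 : ℝ) : ℂ) := by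
    intro x
    rw [projLine, ContinuousLinearMap.smulRight_apply, inner_smul_left]
    simp only [innerSL_apply_apply]
    rw [RCLike.conj_mul]
    norm_cast
  -- lower bound on re ⟪E x, x⟫
  have hElow : ∀ x : H, (l + ε) * ‖x‖ ^ 2 ≤ re ⟪E x, x⟫ := by
    intro x
    have h1 := hco x
    have h2 : re ⟪(E - (l : ℂ) • (1 : H →L[ℂ] H)) x, x⟫
        = re ⟪E x, x⟫ - l * ‖x‖ ^ 2 := by
      rw [sub_apply, inner_sub_left, smul_apply, ContinuousLinearMap.one_apply, inner_smul_left,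
        Complex.conj_ofReal, map_sub]
      rw [RCLike.re_to_complex, RCLike.re_to_complex, Complex.re_ofReal_mul,
        ← RCLike.re_to_complex, ← RCLike.re_to_complex, inner_self_eq_norm_sq]
    rw [h2] at h1
    linarith
  -- the positivity of E - t • projLine φ
  have hpos : (E - (t : ℂ) • projLine φ).IsPositive := by
    rw [isPositive_iff_complex]
    intro x
    have hinner : ⟪(E - (t : ℂ) • projLine φ) x, x⟫
        = ⟪E x, x⟫ - ((t * ‖⟪φ, x⟫‖ ^ 2 : ℝ) : ℂ) := by
      rw [sub_apply, inner_sub_left, smul_apply, inner_smul_left, Complex.conj_ofReal, hP]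
      push_cast
      ring
    have hEre := (isPositive_iff_complex E).mp hE.1 x
    have h3 : re ((t * ‖⟪φ, x⟫‖ ^ 2 : ℝ) : ℂ) = t * ‖⟪φ, x⟫‖ ^ 2 := by
      rw [RCLike.re_to_complex, Complex.ofReal_re]
    have hb : ‖⟪φ, x⟫‖ ^ 2 ≤ ‖x‖ ^ 2 := by
      have := norm_inner_le_norm (𝕜 := ℂ) φ x
      rw [hφ, one_mul] at this
      nlinarith [norm_nonneg (⟪φ, x⟫), norm_nonneg x]
    constructor
    · rw [hinner, map_sub, h3, Complex.ofReal_sub, hEre.1]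
    · rw [hinner, map_sub, h3]
      have := hElow x
      nlinarith [hElow x, hb, ht0, htle, sq_nonneg ‖x‖]
  -- so t is in the strength set
  have hbdd : BddAbove {s : ℝ | s ∈ Set.Icc (0:ℝ) 1 ∧ (E - (s : ℂ) • projLine φ).IsPositive} :=
    ⟨1, fun s hs => hs.1.2⟩
  have hts : t ≤ strength E φ := le_csSup hbdd ⟨⟨ht0, ht1⟩, hpos⟩
  rw [hsφ] at hts
  linarith
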